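/- Applying the pair-counting lower bound to the path: since Q_{2k}(P_n) ≤ 2kn, if 2kn < n²/(2k) − n/2 (e.g., k < √(n)/2 − 1 for large n), then b(P_n) ≥ b̂(P_n) ≥ k+1; in particular b(P_n) = Ω(√n). -/

import Mathlib

open SimpleGraph
open scoped Classical

/-- Burning number: least `k` such that there are fire sources `v₀,…,v_{k-1}` with
`⋃_{r=0}^{k-1} B_r(v_r) = V`. -/
noncomputable def burningNumber (V : Type*) [Fintype V] (G : SimpleGraph V) : ℕ :=
  sInf {k | ∃ v : Fin k → V, ∀ u : V, ∃ r : Fin k, G.dist (v r) u ≤ (r : ℕ)}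

/-- Covering number `b̂`: least `k` such that `k` balls of radius `k` cover `V`. -/
noncomputable def coverNumber (V : Type*) [Fintype V] (G : SimpleGraph V) : ℕ :=
  sInf {k | ∃ v : Fin k → V, ∀ u : V, ∃ i : Fin k, G.dist (v i) u ≤ k}

private lemma pg_walk_bound {n : ℕ} {i j : Fin n} (w : (SimpleGraph.pathGraph n).Walk i j) :
    j.val ≤ i.val + w.length ∧ i.val ≤ j.val + w.length := by
  induction w with
  | nil => simp
  | @cons a b c h w ih =>
    rw [SimpleGraph.pathGraph_adj] at h
    simp only [SimpleGraph.Walk.length_cons]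
    omega

private lemma pg_dist_bound {n : ℕ} (hn : 1 ≤ n) (i j : Fin n) :
    j.val ≤ i.val + (SimpleGraph.pathGraph n).dist i j := by
  obtain ⟨m, rfl⟩ : ∃ m, n = m + 1 := ⟨n - 1, (Nat.succ_pred_eq_of_pos hn).symm⟩
  obtain ⟨w, hw⟩ := (SimpleGraph.pathGraph_connected m).exists_walk_length_eq_dist i j
  have := (pg_walk_bound w).1
  omega

theorem path_pair_count_lower_bound (n k : ℕ) (hn : 1 ≤ n) (hk : 1 ≤ k)
    (h : (2 * k * n : ℝ) < (n : ℝ) ^ 2 / (2 * k) - n / 2) :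
    ((Finset.univ.filter (fun p : Fin n × Fin n =>
        p.1 < p.2 ∧ (SimpleGraph.pathGraph n).dist p.1 p.2 ≤ 2 * k)).card : ℝ)
        ≤ 2 * k * n ∧
      k + 1 ≤ coverNumber (Fin n) (SimpleGraph.pathGraph n) ∧
      coverNumber (Fin n) (SimpleGraph.pathGraph n) ≤
        burningNumber (Fin n) (SimpleGraph.pathGraph n) := by
  obtain ⟨n', rfl⟩ : ∃ m, n = m + 1 := ⟨n - 1, (Nat.succ_pred_eq_of_pos hn).symm⟩
  set n := n' + 1 with hn'
  have hconn : (SimpleGraph.pathGraph n).Connected := SimpleGraph.pathGraph_connected n'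
  set Q := Finset.univ.filter (fun p : Fin n × Fin n =>
      p.1 < p.2 ∧ (SimpleGraph.pathGraph n).dist p.1 p.2 ≤ 2 * k) with hQ
  -- Part 1 (in ℕ)
  have hQn : Q.card ≤ n * (2 * k) := by
    have := Finset.card_le_card_of_injOn
      (f := fun p : Fin n × Fin n => (p.1, p.2.val - p.1.val - 1))
      (s := Q) (t := (Finset.univ : Finset (Fin n)) ×ˢ Finset.range (2 * k))
      (by
        intro p hp
        simp only [Finset.mem_coe, hQ, Finset.mem_filter, Finset.mem_univ, true_and] at hp
        obtain ⟨hlt, hd⟩ := hp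
        have hb := pg_dist_bound hn p.1 p.2
        have hlt' : p.1.val < p.2.val := hlt
        simp only [Finset.mem_coe, Finset.mem_product, Finset.mem_univ, Finset.mem_range, true_and]
        omega)
      (by
        intro p hp q hq he
        simp only [Finset.mem_coe, hQ, Finset.mem_filter, Finset.mem_univ, true_and] at hp hq
        simp only [Prod.mk.injEq] at he
        obtain ⟨h1, h2⟩ := he
        have hp1 : p.1.val < p.2.val := hp.1
        have hq1 : q.1.val < q.2.val := hq.1
        have h1v : p.1.val = q.1.val := by rw [h1]
        have : p.2.val = q.2.val := by omega
        exact Prod.ext h1 (Fin.ext this))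
    simpa using this
  have hQR : (Q.card : ℝ) ≤ 2 * k * n := by
    calc (Q.card : ℝ) ≤ (n * (2 * k) : ℕ) := by exact_mod_cast hQn
    _ = 2 * k * n := by push_cast; ring
  refine ⟨hQR, ?_, ?_⟩
  · -- k + 1 ≤ coverNumber
    have hCne : {m | ∃ v : Fin m → Fin n, ∀ u : Fin n,
        ∃ i : Fin m, (SimpleGraph.pathGraph n).dist (v i) u ≤ m}.Nonempty := by
      refine ⟨n, id, fun u => ⟨u, ?_⟩⟩
      simp [SimpleGraph.dist_self]
    refine le_csInf hCne ?_
    rintro m ⟨v, hv⟩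
    by_contra hlt
    push_neg at hlt
    have hmk : m ≤ k := by omega
    choose c hc using hv
    set S := Finset.univ.filter (fun p : Fin n × Fin n => c p.1 = c p.2) with hS
    set T := S.filter (fun p : Fin n × Fin n => p.1 < p.2) with hT
    -- T ⊆ Q
    have hTQ : T ⊆ Q := by
      intro p hp
      simp only [hT, hS, Finset.mem_filter, Finset.mem_univ, true_and] at hp
      simp only [hQ, Finset.mem_filter, Finset.mem_univ, true_and]
      refine ⟨hp.2, ?_⟩
      have h1 := hc p.1
      have h2 := hc p.2
      rw [hp.1] at h1
      have htri := hconn.dist_triangle (u := p.1) (v := v (c p.2)) (w := p.2)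
      have hcomm : (SimpleGraph.pathGraph n).dist p.1 (v (c p.2)) =
          (SimpleGraph.pathGraph n).dist (v (c p.2)) p.1 := SimpleGraph.dist_comm
      omega
    set a : Fin m → ℕ := fun i => (Finset.univ.filter (fun u : Fin n => c u = i)).card with ha
    have hsum : ∑ i, a i = n := by
      have := Finset.card_eq_sum_card_fiberwise
        (f := c) (s := (Finset.univ : Finset (Fin n))) (t := Finset.univ)
        (fun x _ => Finset.mem_univ _)
      simpa [ha] using this.symm
    have hsq : S.card = ∑ i, a i ^ 2 := by
      have hSeq : S = Finset.univ.biUnion (fun i : Fin m =>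
          (Finset.univ.filter (fun u : Fin n => c u = i)) ×ˢ
          (Finset.univ.filter (fun u : Fin n => c u = i))) := by
        ext p
        simp only [hS, Finset.mem_filter, Finset.mem_univ, true_and, Finset.mem_biUnion,
          Finset.mem_product]
        constructor
        · intro hp; exact ⟨c p.2, hp, rfl⟩
        · rintro ⟨i, h1, h2⟩; rw [h1, h2]
      rw [hSeq, Finset.card_biUnion]
      · refine Finset.sum_congr rfl fun i _ => ?_
        rw [Finset.card_product, sq]
      · intro i _ j _ hij
        refine Finset.disjoint_left.mpr fun p hp hq => ?_
        simp only [Finset.mem_product, Finset.mem_filter, Finset.mem_univ, true_and] at hp hq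
        exact hij (hp.1 ▸ hq.1 ▸ rfl)
    -- split S into <, =, >
    have hsplit : S.card ≤ 2 * T.card + n := by
      have h1 : S.card = T.card + (S.filter (fun p => ¬ p.1 < p.2)).card := by
        rw [hT]; exact (Finset.card_filter_add_card_filter_not _).symm
      have h2 : (S.filter (fun p => ¬ p.1 < p.2)).card =
          (S.filter (fun p : Fin n × Fin n => p.2 < p.1)).card +
          (S.filter (fun p : Fin n × Fin n => p.1 = p.2)).card := by
        rw [← Finset.card_union_of_disjoint]
        · congr 1
          ext p
          simp only [Finset.mem_filter, Finset.mem_union]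
          constructor
          · rintro ⟨hp, hnl⟩
            rcases lt_trichotomy p.1 p.2 with h | h | h
            · exact absurd h hnl
            · exact Or.inr ⟨hp, h⟩
            · exact Or.inl ⟨hp, h⟩
          · rintro (⟨hp, hl⟩ | ⟨hp, he⟩)
            · exact ⟨hp, asymm hl⟩
            · exact ⟨hp, by rw [he]; exact lt_irrefl _⟩
        · refine Finset.disjoint_left.mpr fun p hp hq => ?_
          simp only [Finset.mem_filter] at hp hq
          exact absurd (hq.2 ▸ hp.2) (lt_irrefl _)
      have h3 : (S.filter (fun p : Fin n × Fin n => p.2 < p.1)).card = T.card := by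
        rw [hT]
        refine Finset.card_bij (fun p _ => p.swap) ?_ ?_ ?_
        · intro p hp
          simp only [hS, Finset.mem_filter, Finset.mem_univ, true_and] at hp ⊢
          exact ⟨hp.1.symm, hp.2⟩
        · intro p _ q _ he
          exact Prod.ext (congrArg Prod.snd he) (congrArg Prod.fst he)
        · intro p hp
          refine ⟨p.swap, ?_, rfl⟩
          simp only [hS, Finset.mem_filter, Finset.mem_univ, true_and] at hp ⊢
          exact ⟨hp.1.symm, hp.2⟩
      have h4 : (S.filter (fun p : Fin n × Fin n => p.1 = p.2)).card ≤ n := by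
        have := Finset.card_le_card_of_injOn (f := Prod.fst)
          (s := S.filter (fun p : Fin n × Fin n => p.1 = p.2))
          (t := (Finset.univ : Finset (Fin n)))
          (fun _ _ => Finset.mem_univ _)
          (by
            intro p hp q hq he
            simp only [Finset.mem_coe, Finset.mem_filter] at hp hq
            exact Prod.ext he (hp.2 ▸ hq.2 ▸ he))
        simpa using this
      omega
    -- Cauchy–Schwarz and final contradiction
    have hm0 : 0 < m := by
      rcases Nat.eq_zero_or_pos m with rfl | h0
      · exact (c ⟨0, hn⟩).elim0
      · exact h0
    have hcs : ((n : ℝ)) ^ 2 ≤ (m : ℝ) * ∑ i, (a i : ℝ) ^ 2 := by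
      have := sq_sum_le_card_mul_sum_sq (s := (Finset.univ : Finset (Fin m)))
        (f := fun i => (a i : ℝ))
      simpa [← Nat.cast_sum, hsum] using this
    have hsum2 : (∑ i, (a i : ℝ) ^ 2) = ((∑ i, a i ^ 2 : ℕ) : ℝ) := by push_cast; ring
    have h1 : (∑ i, a i ^ 2) ≤ 2 * T.card + n := by rw [← hsq]; exact hsplit
    have s1 : (m : ℝ) * ((∑ i, a i ^ 2 : ℕ) : ℝ) ≤ (k : ℝ) * ((2 * T.card + n : ℕ) : ℝ) :=
      mul_le_mul (Nat.cast_le.mpr hmk) (Nat.cast_le.mpr h1) (Nat.cast_nonneg _) (Nat.cast_nonneg _)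
    have hfin : ((n : ℝ)) ^ 2 ≤ (k : ℝ) * (2 * (2 * k * n) + n) := by
      calc ((n : ℝ)) ^ 2 ≤ (m : ℝ) * ∑ i, (a i : ℝ) ^ 2 := hcs
        _ = (m : ℝ) * ((∑ i, a i ^ 2 : ℕ) : ℝ) := by rw [hsum2]
        _ ≤ (k : ℝ) * ((2 * T.card + n : ℕ) : ℝ) := s1
        _ ≤ (k : ℝ) * (2 * (2 * k * n) + n) := by
            have hTc : (T.card : ℝ) ≤ 2 * k * n :=
              le_trans (Nat.cast_le.mpr (Finset.card_le_card hTQ)) hQR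
            have heq : ((2 * T.card + n : ℕ) : ℝ) = 2 * (T.card : ℝ) + n := by push_cast; ring
            rw [heq]
            have h2 : 2 * (T.card : ℝ) + n ≤ 2 * (2 * k * n) + n := by linarith
            exact mul_le_mul_of_nonneg_left h2 (Nat.cast_nonneg _)
    have hk0 : (0 : ℝ) < 2 * (k : ℝ) := by positivity
    have hdiv : (n : ℝ) ^ 2 / (2 * k) ≤ 2 * k * n + n / 2 := by
      rw [div_le_iff₀ hk0]
      calc (n : ℝ) ^ 2 ≤ (k : ℝ) * (2 * (2 * k * n) + n) := hfin
        _ = (2 * k * n + n / 2) * (2 * k) := by ring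
    linarith [h, hdiv]
  · -- coverNumber ≤ burningNumber
    have hBne : {m | ∃ v : Fin m → Fin n, ∀ u : Fin n,
        ∃ r : Fin m, (SimpleGraph.pathGraph n).dist (v r) u ≤ (r : ℕ)}.Nonempty := by
      refine ⟨n, id, fun u => ⟨u, ?_⟩⟩
      simp [SimpleGraph.dist_self]
    have hmem := Nat.sInf_mem hBne
    obtain ⟨v, hv⟩ := hmem
    apply Nat.sInf_le
    refine ⟨v, fun u => ?_⟩
    obtain ⟨r, hr⟩ := hv u
    exact ⟨r, hr.trans (le_of_lt r.isLt)⟩
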